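/- In the same abstract setting, (\partial/\partial T_m) dS|_{z=const} = d\hat\Omega_m - \sum_{j=1}^N c^{(m)}_j d\omega_j = d\Omega_m, where d\Omega_m is the A-cycle-normalized differential. -/

import Mathlib

private lemma clm_pi_expand {N : ℕ} {X : Type*} [NormedAddCommGroup X] [NormedSpace ℂ X]
    (L : (Fin N → ℂ) →L[ℂ] X) (v : Fin N → ℂ) :
    L v = ∑ k, v k • L (Pi.single k 1) := by
  conv_lhs => rw [show v = ∑ k, v k • (Pi.single k 1 : Fin N → ℂ) by
    funext i
    simp [Finset.sum_apply, Pi.single_apply, mul_comm]]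
  rw [map_sum]
  simp

/-- In the same abstract Whitham setting as Statement 14, now with the
inverse moduli `u = U(T)` as a function of the slow times `T` at fixed `a = av₀`
(so `∑ₙ Tₙ cⁿⱼ(U(T)) = av₀ⱼ` identically), the `T_m`-derivative of
`dS = ∑ₙ Tₙ d\hatΩ_n` at constant `a` is the `A`-cycle-normalized differential:
`(∂/∂T_m) dS |_{z = const} = d\hatΩ_m - ∑ⱼ cᵐⱼ dωⱼ = dΩ_m`. -/
theorem stmt15 {N M : ℕ} {V : Type*} [NormedAddCommGroup V] [NormedSpace ℂ V]
    (Ωh : Fin M → (Fin N → ℂ) → V)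
    (ω : Fin N → V)
    (c : Fin M → Fin N → (Fin N → ℂ) → ℂ)
    (σ : Fin M → Fin N → Fin N → ℂ)
    (T₀ : Fin M → ℂ) (u₀ : Fin N → ℂ)
    (DΩ : Fin M → ((Fin N → ℂ) →L[ℂ] V))
    (hDΩ : ∀ n, HasFDerivAt (Ωh n) (DΩ n) u₀)
    (hDΩval : ∀ n k, DΩ n (Pi.single k 1) = ∑ j, σ n k j • ω j)
    (Dc : Fin M → Fin N → ((Fin N → ℂ) →L[ℂ] ℂ))
    (hDc : ∀ n j, HasFDerivAt (c n j) (Dc n j) u₀)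
    (hσ : ∀ n k j, Dc n j (Pi.single k 1) = σ n k j)
    (av₀ : Fin N → ℂ)
    (U : (Fin M → ℂ) → (Fin N → ℂ))
    (hU0 : U T₀ = u₀)
    (DU : (Fin M → ℂ) →L[ℂ] (Fin N → ℂ))
    (hDU : HasFDerivAt U DU T₀)
    (hinv : ∀ T : Fin M → ℂ, ∀ j, ∑ n, T n * c n j (U T) = av₀ j) :
    ∀ m, fderiv ℂ (fun T : Fin M → ℂ => ∑ n, T n • Ωh n (U T)) T₀ (Pi.single m 1)
      = Ωh m u₀ - ∑ j, c m j u₀ • ω j := by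
  intro m
  set v : Fin N → ℂ := DU (Pi.single m 1) with hv
  -- derivative of each constraint
  have hC : ∀ j, c m j u₀ + ∑ n, T₀ n * Dc n j v = 0 := by
    intro j
    have hsum : HasFDerivAt (fun T : Fin M → ℂ => ∑ n, T n * c n j (U T))
        (∑ n, (T₀ n • ((Dc n j).comp DU) + c n j u₀ • (ContinuousLinearMap.proj n))) T₀ := by
      apply HasFDerivAt.fun_sum
      intro n _
      have hp : HasFDerivAt (fun T : Fin M → ℂ => T n)
          (ContinuousLinearMap.proj n : (Fin M → ℂ) →L[ℂ] ℂ) T₀ :=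
        (ContinuousLinearMap.proj (R := ℂ) (φ := fun _ : Fin M => ℂ) n).hasFDerivAt
      have hc' : HasFDerivAt (fun T : Fin M → ℂ => c n j (U T)) ((Dc n j).comp DU) T₀ := by
        simpa using ((hU0 ▸ hDc n j).comp T₀ hDU)
      simpa [hU0] using hp.fun_mul hc'
    have hconst : HasFDerivAt (fun T : Fin M → ℂ => ∑ n, T n * c n j (U T))
        (0 : (Fin M → ℂ) →L[ℂ] ℂ) T₀ := by
      have : (fun T : Fin M → ℂ => ∑ n, T n * c n j (U T)) = fun _ => av₀ j := by
        funext T; exact hinv T j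
      rw [this]; exact hasFDerivAt_const _ _
    have h0 := hsum.unique hconst
    have := congrArg (fun L : (Fin M → ℂ) →L[ℂ] ℂ => L (Pi.single m 1)) h0
    simpa [ContinuousLinearMap.sum_apply, Pi.single_apply, Finset.sum_add_distrib,
      add_comm, smul_eq_mul, ← hv] using this
  -- derivative of the main function
  have hsum : HasFDerivAt (fun T : Fin M → ℂ => ∑ n, T n • Ωh n (U T))
      (∑ n, (T₀ n • ((DΩ n).comp DU)
        + (ContinuousLinearMap.proj n : (Fin M → ℂ) →L[ℂ] ℂ).smulRight (Ωh n u₀))) T₀ := by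
    apply HasFDerivAt.fun_sum
    intro n _
    have hp : HasFDerivAt (fun T : Fin M → ℂ => T n)
        (ContinuousLinearMap.proj n : (Fin M → ℂ) →L[ℂ] ℂ) T₀ :=
      (ContinuousLinearMap.proj (R := ℂ) (φ := fun _ : Fin M => ℂ) n).hasFDerivAt
    have hf : HasFDerivAt (fun T : Fin M → ℂ => Ωh n (U T)) ((DΩ n).comp DU) T₀ := by
      simpa using ((hU0 ▸ hDΩ n).comp T₀ hDU)
    simpa [hU0] using hp.fun_smul hf
  rw [hsum.fderiv]
  have key : ∑ n, T₀ n • (DΩ n) v = - ∑ j, c m j u₀ • ω j := by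
    have expand : ∀ n : Fin M, (DΩ n) v = ∑ j, (Dc n j v) • ω j := by
      intro n
      rw [clm_pi_expand (DΩ n) v]
      have hd : ∀ j, Dc n j v = ∑ k, v k * σ n k j := by
        intro j
        rw [clm_pi_expand (Dc n j) v]
        simp [hσ, smul_eq_mul]
      simp only [hDΩval, hd, Finset.smul_sum, Finset.sum_smul]
      rw [Finset.sum_comm]
      congr 1; funext k; congr 1; funext j
      rw [smul_smul, mul_comm]
    simp only [expand, Finset.smul_sum]
    rw [Finset.sum_comm, ← Finset.sum_neg_distrib]
    congr 1; funext j
    have h1 : ∑ n, T₀ n * Dc n j v = - c m j u₀ := by linear_combination hC j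
    simp only [smul_smul]
    rw [← Finset.sum_smul, h1, neg_smul]
  have final : (∑ n, (T₀ n • ((DΩ n).comp DU)
        + (ContinuousLinearMap.proj n : (Fin M → ℂ) →L[ℂ] ℂ).smulRight (Ωh n u₀)))
        (Pi.single m 1)
      = (∑ n, T₀ n • (DΩ n) v) + Ωh m u₀ := by
    simp [ContinuousLinearMap.sum_apply, Finset.sum_add_distrib, Pi.single_apply, ← hv]
  rw [final, key]
  abel
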